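/- Let H be a real Hilbert space and T : H → H a bounded linear operator that is self-adjoint, positive semidefinite, non-expansive (‖T‖ ≤ 1), and such that 1 is not an eigenvalue of T. Then for every integer n ≥ 2 the operator I − T + T^n is boundedly invertible, and for every φ ∈ H one has ‖(I − T + T^n)^{-1} (T^n φ)‖ → 0 as n → ∞. -/

import Mathlib

open Filter
open scoped RealInnerProductSpace

section aux
variable {H : Type*} [NormedAddCommGroup H] [InnerProductSpace ℝ H]
variable (T : H →L[ℝ] H)

private lemma aux_sa_pow (hsa : ∀ x y : H, ⟪T x, y⟫ = ⟪x, T y⟫) :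
    ∀ (k : ℕ) (x y : H), ⟪(T ^ k) x, y⟫ = ⟪x, (T ^ k) y⟫ := by
  intro k
  induction k with
  | zero => simp
  | succ n ih =>
    intro x y
    have hc : ∀ z : H, (T ^ n) (T z) = T ((T ^ n) z) := fun z => by
      rw [← ContinuousLinearMap.mul_apply, ← ContinuousLinearMap.mul_apply, ← pow_succ,
        pow_succ']
    rw [pow_succ']
    simp only [ContinuousLinearMap.mul_apply]
    rw [hsa, ih, hc]

private lemma aux_apply_pow_succ (k : ℕ) (x : H) : (T ^ k) (T x) = (T ^ (k + 1)) x := by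
  rw [pow_succ, ContinuousLinearMap.mul_apply]

private lemma aux_pow_succ_apply (k : ℕ) (x : H) : T ((T ^ k) x) = (T ^ (k + 1)) x := by
  rw [pow_succ', ContinuousLinearMap.mul_apply]

private lemma aux_inner_pow_add (hsa : ∀ x y : H, ⟪T x, y⟫ = ⟪x, T y⟫) (i j : ℕ) (x : H) :
    ⟪(T ^ (i + j)) x, x⟫ = ⟪(T ^ i) x, (T ^ j) x⟫ := by
  rw [pow_add, ContinuousLinearMap.mul_apply, aux_sa_pow T hsa i, real_inner_comm]

private lemma aux_pos_pow (hsa : ∀ x y : H, ⟪T x, y⟫ = ⟪x, T y⟫)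
    (hpos : ∀ x : H, 0 ≤ ⟪T x, x⟫) :
    ∀ (k : ℕ) (x : H), 0 ≤ ⟪(T ^ k) x, x⟫ := by
  intro k x
  rcases Nat.even_or_odd k with ⟨m, hm⟩ | ⟨m, hm⟩
  · rw [hm, aux_inner_pow_add T hsa]
    exact real_inner_self_nonneg
  · rw [hm, show 2 * m + 1 = m + (m + 1) from by ring, aux_inner_pow_add T hsa,
      ← aux_pow_succ_apply, real_inner_comm]
    exact hpos _

/-- Cauchy–Schwarz for the positive symmetric bilinear form `⟪S·,·⟫`. -/
private lemma aux_cs (S : H →L[ℝ] H) (hS : ∀ x y : H, ⟪S x, y⟫ = ⟪x, S y⟫)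
    (hSpos : ∀ x : H, 0 ≤ ⟪S x, x⟫) (x y : H) :
    ⟪S x, y⟫ ^ 2 ≤ ⟪S x, x⟫ * ⟪S y, y⟫ := by
  have hsym : ⟪S y, x⟫ = ⟪S x, y⟫ := by rw [hS, real_inner_comm]
  have key : ∀ t : ℝ, 0 ≤ ⟪S y, y⟫ * (t * t) + (2 * ⟪S x, y⟫) * t + ⟪S x, x⟫ := by
    intro t
    have h0 := hSpos (x + t • y)
    have hexp : ⟪S (x + t • y), x + t • y⟫
        = ⟪S y, y⟫ * (t * t) + (2 * ⟪S x, y⟫) * t + ⟪S x, x⟫ := by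
      simp only [map_add, map_smul, inner_add_left, inner_add_right, real_inner_smul_left,
        real_inner_smul_right, ContinuousLinearMap.coe_smul', Pi.smul_apply, smul_eq_mul]
      rw [hsym]
      ring
    linarith [hexp ▸ h0]
  have hd := discrim_le_zero key
  rw [discrim] at hd
  nlinarith [hd]

private lemma aux_norm_sq_le (S : H →L[ℝ] H) (hS : ∀ x y : H, ⟪S x, y⟫ = ⟪x, S y⟫)
    (hSpos : ∀ x : H, 0 ≤ ⟪S x, x⟫) (s : ℝ)
    (hb : ∀ x : H, ⟪S x, x⟫ ≤ s * ‖x‖ ^ 2) (x : H) :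
    ‖S x‖ ^ 2 ≤ s * ⟪S x, x⟫ := by
  by_cases hz : S x = 0
  · rw [hz]
    simp
  · have h1 : ⟪S x, S x⟫ ^ 2 ≤ ⟪S x, x⟫ * ⟪S (S x), S x⟫ := aux_cs S hS hSpos x (S x)
    have h2 : ⟪S (S x), S x⟫ ≤ s * ‖S x‖ ^ 2 := hb (S x)
    have h3 : 0 ≤ ⟪S x, x⟫ := hSpos x
    have h4 : ⟪S x, S x⟫ = ‖S x‖ ^ 2 := real_inner_self_eq_norm_sq _
    have h5 : 0 < ‖S x‖ ^ 2 := by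
      have := norm_pos_iff.mpr hz
      positivity
    nlinarith [mul_le_mul_of_nonneg_left h2 h3]

private lemma aux_opnorm_le (S : H →L[ℝ] H) (hS : ∀ x y : H, ⟪S x, y⟫ = ⟪x, S y⟫)
    (hSpos : ∀ x : H, 0 ≤ ⟪S x, x⟫) (c : ℝ) (hc : 0 ≤ c)
    (hb : ∀ x : H, ⟪S x, x⟫ ≤ c * ‖x‖ ^ 2) : ‖S‖ ≤ c := by
  apply ContinuousLinearMap.opNorm_le_bound _ hc
  intro x
  have h := aux_norm_sq_le S hS hSpos c hb x
  have h2 := hb x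
  have h3 := hSpos x
  nlinarith [norm_nonneg (S x), norm_nonneg x, mul_nonneg hc (norm_nonneg x),
    mul_le_mul_of_nonneg_left h2 hc]

private lemma aux_T_le (hne : ‖T‖ ≤ 1) (x : H) : ⟪T x, x⟫ ≤ ‖x‖ ^ 2 := by
  have h1 := real_inner_le_norm (T x) x
  have h2 := T.le_opNorm x
  nlinarith [norm_nonneg x, norm_nonneg (T x)]

private lemma aux_dec (hsa : ∀ x y : H, ⟪T x, y⟫ = ⟪x, T y⟫)
    (hpos : ∀ x : H, 0 ≤ ⟪T x, x⟫) (hne : ‖T‖ ≤ 1) (k : ℕ) (x : H) :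
    ⟪(T ^ (k + 1)) x, x⟫ ≤ ⟪(T ^ k) x, x⟫ := by
  have hTsq : ∀ z : H, ‖T z‖ ^ 2 ≤ ⟪T z, z⟫ := by
    intro z
    have := aux_norm_sq_le T hsa hpos 1 (fun y => by simpa using aux_T_le T hne y) z
    simpa using this
  rcases Nat.even_or_odd k with ⟨m, hm⟩ | ⟨m, hm⟩
  · subst hm
    have hL : ⟪(T ^ (m + m + 1)) x, x⟫ = ⟪T ((T ^ m) x), (T ^ m) x⟫ := by
      rw [show m + m + 1 = m + (m + 1) from by ring, aux_inner_pow_add T hsa,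
        ← aux_pow_succ_apply, real_inner_comm]
    have hR : ⟪(T ^ (m + m)) x, x⟫ = ‖(T ^ m) x‖ ^ 2 := by
      rw [aux_inner_pow_add T hsa, real_inner_self_eq_norm_sq]
    rw [hL, hR]
    exact aux_T_le T hne _
  · subst hm
    have hL : ⟪(T ^ (2 * m + 1 + 1)) x, x⟫ = ‖T ((T ^ m) x)‖ ^ 2 := by
      rw [show 2 * m + 1 + 1 = (m + 1) + (m + 1) from by ring, aux_inner_pow_add T hsa,
        real_inner_self_eq_norm_sq, ← aux_pow_succ_apply]
    have hR : ⟪(T ^ (2 * m + 1)) x, x⟫ = ⟪T ((T ^ m) x), (T ^ m) x⟫ := by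
      rw [show 2 * m + 1 = m + (m + 1) from by ring, aux_inner_pow_add T hsa,
        ← aux_pow_succ_apply, real_inner_comm]
    rw [hL, hR]
    exact hTsq _

private lemma aux_a_antitone (hsa : ∀ x y : H, ⟪T x, y⟫ = ⟪x, T y⟫)
    (hpos : ∀ x : H, 0 ≤ ⟪T x, x⟫) (hne : ‖T‖ ≤ 1) (x : H) :
    Antitone (fun k : ℕ => ⟪(T ^ k) x, x⟫) :=
  antitone_nat_of_succ_le fun k => aux_dec T hsa hpos hne k x

/-- the key mixed inner product. -/
private lemma aux_mixed (hsa : ∀ x y : H, ⟪T x, y⟫ = ⟪x, T y⟫) (n : ℕ) (x : H) :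
    ⟪x - T x, (T ^ n) x⟫ = ⟪(T ^ n) x, x⟫ - ⟪(T ^ (n + 1)) x, x⟫ := by
  rw [inner_sub_left]
  congr 1
  · exact real_inner_comm _ _
  · rw [hsa, aux_pow_succ_apply, real_inner_comm]

private lemma aux_bform (n : ℕ) (x : H) :
    ⟪((T ^ n) - (T ^ (n + 1))) x, x⟫ = ⟪(T ^ n) x, x⟫ - ⟪(T ^ (n + 1)) x, x⟫ := by
  rw [ContinuousLinearMap.sub_apply, inner_sub_left]

private lemma aux_A_apply (n : ℕ) (x : H) :
    ((1 : H →L[ℝ] H) - T + T ^ n) x = (x - T x) + (T ^ n) x := by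
  simp [ContinuousLinearMap.add_apply, ContinuousLinearMap.sub_apply]

private lemma aux_est1 (hsa : ∀ x y : H, ⟪T x, y⟫ = ⟪x, T y⟫)
    (hpos : ∀ x : H, 0 ≤ ⟪T x, x⟫) (hne : ‖T‖ ≤ 1) (n : ℕ) (x : H) :
    ‖(T ^ n) x‖ ^ 2 ≤ ‖((1 : H →L[ℝ] H) - T + T ^ n) x‖ ^ 2 := by
  rw [aux_A_apply, norm_add_sq_real, aux_mixed T hsa]
  have hd := aux_dec T hsa hpos hne n x
  nlinarith [sq_nonneg ‖x - T x‖]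

private lemma aux_est2 (hsa : ∀ x y : H, ⟪T x, y⟫ = ⟪x, T y⟫) (n : ℕ) (x : H) :
    4 * (⟪(T ^ n) x, x⟫ - ⟪(T ^ (n + 1)) x, x⟫)
      ≤ ‖((1 : H →L[ℝ] H) - T + T ^ n) x‖ ^ 2 := by
  rw [aux_A_apply, norm_add_sq_real]
  have h := norm_sub_sq_real (x - T x) ((T ^ n) x)
  rw [aux_mixed T hsa] at *
  nlinarith [sq_nonneg ‖(x - T x) - (T ^ n) x‖]

/-- The gaps `b_k = a_k - a_{k+1}` are decreasing. -/
private lemma aux_b_succ_le (hsa : ∀ x y : H, ⟪T x, y⟫ = ⟪x, T y⟫)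
    (hpos : ∀ x : H, 0 ≤ ⟪T x, x⟫) (k : ℕ) (x : H) :
    ⟪(T ^ (k + 1)) x, x⟫ - ⟪(T ^ (k + 2)) x, x⟫
      ≤ ⟪(T ^ k) x, x⟫ - ⟪(T ^ (k + 1)) x, x⟫ := by
  have hz : 0 ≤ ⟪(T ^ k) (x - T x), x - T x⟫ := aux_pos_pow T hsa hpos k _
  have hexp : ⟪(T ^ k) (x - T x), x - T x⟫
      = ⟪(T ^ k) x, x⟫ - 2 * ⟪(T ^ (k + 1)) x, x⟫ + ⟪(T ^ (k + 2)) x, x⟫ := by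
    rw [map_sub, inner_sub_left, inner_sub_right, inner_sub_right]
    have e1 : ⟪(T ^ k) x, T x⟫ = ⟪(T ^ (k + 1)) x, x⟫ := by
      rw [← hsa, aux_pow_succ_apply]
    have e2 : ⟪(T ^ k) (T x), x⟫ = ⟪(T ^ (k + 1)) x, x⟫ := by
      rw [aux_apply_pow_succ]
    have e3 : ⟪(T ^ k) (T x), T x⟫ = ⟪(T ^ (k + 2)) x, x⟫ := by
      rw [aux_apply_pow_succ, ← hsa, aux_pow_succ_apply]
    rw [e1, e2, e3]
    ring
  linarith [hexp ▸ hz]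

/-- bound `b_n(x) ≤ ‖x‖² / (n+1)`. -/
private lemma aux_b_bound (hsa : ∀ x y : H, ⟪T x, y⟫ = ⟪x, T y⟫)
    (hpos : ∀ x : H, 0 ≤ ⟪T x, x⟫) (n : ℕ) (x : H) :
    ⟪(T ^ n) x, x⟫ - ⟪(T ^ (n + 1)) x, x⟫ ≤ (1 / (n + 1)) * ‖x‖ ^ 2 := by
  set b : ℕ → ℝ := fun k => ⟪(T ^ k) x, x⟫ - ⟪(T ^ (k + 1)) x, x⟫ with hb
  have hbanti : Antitone b := antitone_nat_of_succ_le fun k => aux_b_succ_le T hsa hpos k x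
  have hsum : ∑ k ∈ Finset.range (n + 1), b k
      = ⟪(T ^ 0) x, x⟫ - ⟪(T ^ (n + 1)) x, x⟫ :=
    Finset.sum_range_sub' (fun k => ⟪(T ^ k) x, x⟫) (n + 1)
  have hcard : (n + 1 : ℝ) * b n ≤ ∑ k ∈ Finset.range (n + 1), b k := by
    have h := Finset.card_nsmul_le_sum (Finset.range (n + 1)) b (b n)
      (fun i hi => hbanti (Nat.le_of_lt_succ (Finset.mem_range.mp hi)))
    simpa [nsmul_eq_mul] using h
  have h0 : ⟪(T ^ 0) x, x⟫ = ‖x‖ ^ 2 := by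
    simp [real_inner_self_eq_norm_sq]
  have hnn : 0 ≤ ⟪(T ^ (n + 1)) x, x⟫ := aux_pos_pow T hsa hpos _ x
  have hle : (n + 1 : ℝ) * b n ≤ ‖x‖ ^ 2 := by
    rw [hsum, h0] at hcard
    linarith
  have hpos' : (0 : ℝ) < n + 1 := by positivity
  have hbn : b n = ⟪(T ^ n) x, x⟫ - ⟪(T ^ (n + 1)) x, x⟫ := rfl
  rw [← hbn, show (1 / (n + 1 : ℝ)) * ‖x‖ ^ 2 = ‖x‖ ^ 2 / (n + 1) from by ring,
    le_div_iff₀ hpos', mul_comm]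
  linarith [hle]

private lemma aux_logconv (hsa : ∀ x y : H, ⟪T x, y⟫ = ⟪x, T y⟫)
    (hpos : ∀ x : H, 0 ≤ ⟪T x, x⟫) (k : ℕ) (x : H) :
    ⟪(T ^ (k + 1)) x, x⟫ ^ 2 ≤ ⟪(T ^ k) x, x⟫ * ⟪(T ^ (k + 2)) x, x⟫ := by
  have h := aux_cs (T ^ k) (aux_sa_pow T hsa k) (aux_pos_pow T hsa hpos k) (T x) x
  have e1 : ⟪(T ^ k) (T x), x⟫ = ⟪(T ^ (k + 1)) x, x⟫ := by rw [aux_apply_pow_succ]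
  have e2 : ⟪(T ^ k) (T x), T x⟫ = ⟪(T ^ (k + 2)) x, x⟫ := by
    rw [aux_apply_pow_succ, ← hsa, aux_pow_succ_apply]
  rw [e1, e2] at h
  nlinarith [h]

private lemma aux_Q (hsa : ∀ x y : H, ⟪T x, y⟫ = ⟪x, T y⟫)
    (hpos : ∀ x : H, 0 ≤ ⟪T x, x⟫) (x : H) :
    ∀ n : ℕ, ⟪(T ^ (n + 1)) x, x⟫ * ⟪T x, x⟫
      ≤ ⟪(T ^ (n + 2)) x, x⟫ * ⟪(T ^ 0) x, x⟫ := by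
  intro n
  induction n with
  | zero =>
    have h := aux_logconv T hsa hpos 0 x
    simp only [zero_add, pow_one] at h ⊢
    nlinarith [h]
  | succ m ih =>
    have hlc := aux_logconv T hsa hpos (m + 1) x
    rcases eq_or_lt_of_le (aux_pos_pow T hsa hpos (m + 2) x) with hz | hpos2
    · rw [← hz, zero_mul]
      exact mul_nonneg (aux_pos_pow T hsa hpos _ x) (aux_pos_pow T hsa hpos _ x)
    · have h1 := mul_le_mul_of_nonneg_right ih (aux_pos_pow T hsa hpos (m + 3) x)
      have h2 := mul_le_mul_of_nonneg_right hlc (hpos x)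
      nlinarith [aux_pos_pow T hsa hpos 0 x, hpos x]

private lemma aux_lower (hsa : ∀ x y : H, ⟪T x, y⟫ = ⟪x, T y⟫)
    (hpos : ∀ x : H, 0 ≤ ⟪T x, x⟫) (x : H) :
    ∀ n : ℕ, ⟪T x, x⟫ ^ (n + 1) ≤ ⟪(T ^ (n + 1)) x, x⟫ * ⟪(T ^ 0) x, x⟫ ^ n := by
  intro n
  induction n with
  | zero => simp
  | succ m ih =>
    have hQ := aux_Q T hsa hpos x m
    have h1 : ⟪T x, x⟫ ^ (m + 2) ≤ (⟪(T ^ (m + 1)) x, x⟫ * ⟪(T ^ 0) x, x⟫ ^ m) * ⟪T x, x⟫ := by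
      rw [pow_succ]
      exact mul_le_mul_of_nonneg_right ih (hpos x)
    have h2 : (⟪(T ^ (m + 1)) x, x⟫ * ⟪T x, x⟫) * ⟪(T ^ 0) x, x⟫ ^ m
        ≤ (⟪(T ^ (m + 2)) x, x⟫ * ⟪(T ^ 0) x, x⟫) * ⟪(T ^ 0) x, x⟫ ^ m :=
      mul_le_mul_of_nonneg_right hQ (pow_nonneg (aux_pos_pow T hsa hpos 0 x) m)
    calc ⟪T x, x⟫ ^ (m + 2)
        ≤ (⟪(T ^ (m + 1)) x, x⟫ * ⟪(T ^ 0) x, x⟫ ^ m) * ⟪T x, x⟫ := h1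
      _ = (⟪(T ^ (m + 1)) x, x⟫ * ⟪T x, x⟫) * ⟪(T ^ 0) x, x⟫ ^ m := by ring
      _ ≤ (⟪(T ^ (m + 2)) x, x⟫ * ⟪(T ^ 0) x, x⟫) * ⟪(T ^ 0) x, x⟫ ^ m := h2
      _ = ⟪(T ^ (m + 2)) x, x⟫ * ⟪(T ^ 0) x, x⟫ ^ (m + 1) := by ring

private lemma aux_quad (hsa : ∀ x y : H, ⟪T x, y⟫ = ⟪x, T y⟫)
    (hpos : ∀ x : H, 0 ≤ ⟪T x, x⟫) (hne : ‖T‖ ≤ 1) (n : ℕ) (hn : 1 ≤ n) (x : H) :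
    ⟪T x, x⟫ - ⟪(T ^ n) x, x⟫ ≤ (1 - 1 / (2 * n)) * ‖x‖ ^ 2 := by
  obtain ⟨m, rfl⟩ := Nat.exists_eq_add_of_le hn
  set N := 1 + m with hN
  have hNpos : (0 : ℝ) < N := by positivity
  have h0 : ⟪(T ^ 0) x, x⟫ = ‖x‖ ^ 2 := by simp [real_inner_self_eq_norm_sq]
  have ha1 : 0 ≤ ⟪T x, x⟫ := hpos x
  have haN : 0 ≤ ⟪(T ^ N) x, x⟫ := aux_pos_pow T hsa hpos N x
  have ha1le : ⟪T x, x⟫ ≤ ‖x‖ ^ 2 := aux_T_le T hne x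
  have hN1 : (1 : ℝ) ≤ (N : ℝ) := by exact_mod_cast hn
  have hfrac : 1 / (2 * (N : ℝ)) ≤ 1 / 2 := by
    rw [div_le_div_iff₀ (by positivity) (by norm_num)]
    nlinarith [hN1]
  have hfrac0 : 0 < 1 / (2 * (N : ℝ)) := by positivity
  by_cases hc : ⟪T x, x⟫ ≤ (1 - 1 / (2 * N)) * ‖x‖ ^ 2
  · linarith
  · push_neg at hc
    by_cases hx0 : ‖x‖ ^ 2 = 0
    · rw [hx0] at ha1le hc ⊢
      nlinarith
    · have hx0' : 0 < ‖x‖ ^ 2 := lt_of_le_of_ne (by positivity) (Ne.symm hx0)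
      -- Bernoulli: (1 - 1/(2N))^N ≥ 1/2
      have hB : (1 / 2 : ℝ) ≤ (1 - 1 / (2 * N)) ^ N := by
        have := one_add_mul_le_pow (a := -(1 / (2 * (N : ℝ)))) (by nlinarith) N
        have hNN : (N : ℝ) * (1 / (2 * N)) = 1 / 2 := by
          field_simp
        calc (1 / 2 : ℝ) = 1 + (N : ℝ) * (-(1 / (2 * N))) := by
              rw [mul_neg, hNN]; ring
          _ ≤ (1 + -(1 / (2 * N))) ^ N := this
          _ = (1 - 1 / (2 * N)) ^ N := by ring_nf
      -- lower bound on a_N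
      have hlow : ⟪T x, x⟫ ^ N ≤ ⟪(T ^ N) x, x⟫ * (‖x‖ ^ 2) ^ (N - 1) := by
        have := aux_lower T hsa hpos x m
        rw [h0] at this
        simpa [hN, Nat.add_comm] using this
      have hbase : (0 : ℝ) ≤ (1 - 1 / (2 * N)) * ‖x‖ ^ 2 := by nlinarith
      have hpow : ((1 - 1 / (2 * N)) * ‖x‖ ^ 2) ^ N ≤ ⟪T x, x⟫ ^ N :=
        pow_le_pow_left₀ hbase hc.le N
      have hval : ((1 - 1 / (2 * N)) * ‖x‖ ^ 2) ^ N
          = ((1 - 1 / (2 * N)) ^ N * (‖x‖ ^ 2)) * (‖x‖ ^ 2) ^ (N - 1) := by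
        rw [mul_pow]
        have hxp : (‖x‖ ^ 2) ^ N = ‖x‖ ^ 2 * (‖x‖ ^ 2) ^ (N - 1) := by
          conv_lhs => rw [show N = (N - 1) + 1 from by omega]
          rw [pow_succ]
          ring
        rw [hxp]
        ring
      have hchain : ((1 - 1 / (2 * N)) ^ N * (‖x‖ ^ 2)) * (‖x‖ ^ 2) ^ (N - 1)
          ≤ ⟪(T ^ N) x, x⟫ * (‖x‖ ^ 2) ^ (N - 1) := by
        rw [← hval]
        exact le_trans hpow hlow
      have hNx : (1 - 1 / (2 * N)) ^ N * (‖x‖ ^ 2) ≤ ⟪(T ^ N) x, x⟫ :=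
        le_of_mul_le_mul_right hchain (by positivity)
      have haNlow : (1 / 2 : ℝ) * ‖x‖ ^ 2 ≤ ⟪(T ^ N) x, x⟫ := by
        nlinarith [hB, hx0']
      nlinarith [hfrac, hx0']

end aux

set_option maxHeartbeats 1000000 in
/-- First limit of the discrepancy principle (Theorem 2.7) for the family
`B_n = T - T^n`: the operators `I - T + T^n` are boundedly invertible and
`‖(I - T + T^n)⁻¹ (T^n φ)‖ → 0` for every `φ`. -/
theorem stmt_8
    {H : Type*} [NormedAddCommGroup H] [InnerProductSpace ℝ H] [CompleteSpace H]
    (T : H →L[ℝ] H)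
    (hsa : ∀ x y : H, ⟪T x, y⟫ = ⟪x, T y⟫)
    (hpos : ∀ x : H, 0 ≤ ⟪T x, x⟫)
    (hne : ‖T‖ ≤ 1)
    (hev : ∀ x : H, T x = x → x = 0) :
    (∀ n : ℕ, 2 ≤ n → IsUnit ((1 : H →L[ℝ] H) - T + T ^ n)) ∧
    (∀ φ : H,
      Tendsto (fun n : ℕ =>
          ‖(Ring.inverse ((1 : H →L[ℝ] H) - T + T ^ n)) ((T ^ n) φ)‖)
        atTop (nhds 0)) := by
  have hunit : ∀ n : ℕ, 2 ≤ n → IsUnit ((1 : H →L[ℝ] H) - T + T ^ n) := by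
    intro n hn
    have hn1 : 1 ≤ n := le_trans (by norm_num) hn
    have hSsym : ∀ x y : H, ⟪(T - T ^ n) x, y⟫ = ⟪x, (T - T ^ n) y⟫ := by
      intro x y
      simp only [ContinuousLinearMap.sub_apply, inner_sub_left, inner_sub_right]
      rw [hsa, aux_sa_pow T hsa]
    have hSpos : ∀ x : H, 0 ≤ ⟪(T - T ^ n) x, x⟫ := by
      intro x
      simp only [ContinuousLinearMap.sub_apply, inner_sub_left]
      have h1 : ⟪(T ^ n) x, x⟫ ≤ ⟪(T ^ 1) x, x⟫ := aux_a_antitone T hsa hpos hne x hn1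
      rw [pow_one] at h1
      linarith
    have hquad : ∀ x : H, ⟪(T - T ^ n) x, x⟫ ≤ (1 - 1 / (2 * n)) * ‖x‖ ^ 2 := by
      intro x
      simp only [ContinuousLinearMap.sub_apply, inner_sub_left]
      exact aux_quad T hsa hpos hne n hn1 x
    have hnn : (0 : ℝ) < (n : ℝ) := by exact_mod_cast lt_of_lt_of_le (by norm_num) hn
    have hn1' : (1 : ℝ) ≤ (n : ℝ) := by exact_mod_cast hn1
    have hcpos : (0 : ℝ) ≤ 1 - 1 / (2 * n) := by
      have : 1 / (2 * (n : ℝ)) ≤ 1 / 2 := by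
        rw [div_le_div_iff₀ (by positivity) (by norm_num)]
        nlinarith
      linarith
    have hnorm : ‖T - T ^ n‖ ≤ 1 - 1 / (2 * n) :=
      aux_opnorm_le (T - T ^ n) hSsym hSpos _ hcpos hquad
    have hlt : ‖T - T ^ n‖ < 1 := lt_of_le_of_lt hnorm (by
      have : (0 : ℝ) < 1 / (2 * (n : ℝ)) := by positivity
      linarith)
    have hu : IsUnit ((1 : H →L[ℝ] H) - (T - T ^ n)) := isUnit_one_sub_of_norm_lt_one hlt
    have heq : (1 : H →L[ℝ] H) - (T - T ^ n) = 1 - T + T ^ n := by abel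
    rwa [heq] at hu
  refine ⟨hunit, ?_⟩
  -- density of the range of 1 - T
  have hdense : Dense ((LinearMap.range (((1 : H →L[ℝ] H) - T : H →L[ℝ] H) : H →ₗ[ℝ] H) : Submodule ℝ H) : Set H) := by
    rw [Submodule.dense_iff_topologicalClosure_eq_top,
      Submodule.topologicalClosure_eq_top_iff, Submodule.eq_bot_iff]
    intro v hv
    have h1 : ⟪((1 : H →L[ℝ] H) - T) v, v⟫ = 0 :=
      (Submodule.mem_orthogonal _ v).mp hv _ (LinearMap.mem_range_self _ v)
    have h2 : ⟪T v, v⟫ = ‖v‖ ^ 2 := by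
      simp only [ContinuousLinearMap.sub_apply, ContinuousLinearMap.one_apply,
        inner_sub_left] at h1
      have := real_inner_self_eq_norm_sq v
      linarith
    have h4 : ‖T v‖ ≤ ‖v‖ := by
      have := T.le_opNorm v
      nlinarith [norm_nonneg v]
    have h3 : ‖v - T v‖ ^ 2 ≤ 0 := by
      rw [norm_sub_sq_real, real_inner_comm, h2]
      nlinarith [norm_nonneg v, norm_nonneg (T v)]
    have h5 : T v = v := by
      have h6 : ‖v - T v‖ = 0 := by nlinarith [norm_nonneg (v - T v)]
      have h7 : v - T v = 0 := norm_eq_zero.mp h6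
      have := sub_eq_zero.mp h7
      exact this.symm
    exact hev v h5
  intro φ
  rw [Metric.tendsto_atTop]
  intro ε hε
  obtain ⟨w, hwK, hwd⟩ := hdense.exists_dist_lt φ (show (0:ℝ) < ε / 2 by positivity)
  obtain ⟨χ, hχ⟩ := hwK
  obtain ⟨N0, hN0⟩ := exists_nat_gt (‖χ‖ ^ 2 / ε ^ 2)
  refine ⟨max N0 2, fun n hn => ?_⟩
  have hn2 : 2 ≤ n := le_trans (le_max_right _ _) hn
  have hnN0 : N0 ≤ n := le_trans (le_max_left _ _) hn
  set A := (1 : H →L[ℝ] H) - T + T ^ n with hA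
  have hU : IsUnit A := hunit n hn2
  set iA := Ring.inverse A with hiA
  have hmul1 : A * iA = 1 := Ring.mul_inverse_cancel A hU
  have hmul2 : iA * A = 1 := Ring.inverse_mul_cancel A hU
  have hTA : Commute T A :=
    ((Commute.one_right T).sub_right (Commute.refl T)).add_right
      ((Commute.refl T).pow_right n)
  have hcomm : Commute iA T := by
    show iA * T = T * iA
    calc iA * T = iA * (T * (A * iA)) := by rw [hmul1, mul_one]
      _ = iA * ((T * A) * iA) := by rw [← mul_assoc T A iA]
      _ = iA * ((A * T) * iA) := by rw [hTA.eq]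
      _ = (iA * A) * (T * iA) := by simp only [mul_assoc]
      _ = T * iA := by rw [hmul2, one_mul]
  set r := φ - w with hr
  have hrw : ‖r‖ < ε / 2 := by
    rw [hr, ← dist_eq_norm]
    exact hwd
  have hw : w = χ - T χ := by
    rw [← hχ]
    simp [ContinuousLinearMap.sub_apply]
  -- term 2 : uniform bound
  have ht2 : ‖iA ((T ^ n) r)‖ ≤ ‖r‖ := by
    have hcn : iA ((T ^ n) r) = (T ^ n) (iA r) := by
      have hcp := (hcomm.pow_right n).eq
      calc iA ((T ^ n) r) = (iA * T ^ n) r := (ContinuousLinearMap.mul_apply _ _ _).symm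
        _ = (T ^ n * iA) r := by rw [hcp]
        _ = (T ^ n) (iA r) := ContinuousLinearMap.mul_apply _ _ _
    rw [hcn]
    have h1 := aux_est1 T hsa hpos hne n (iA r)
    have h2 : ((1 : H →L[ℝ] H) - T + T ^ n) (iA r) = r := by
      rw [← hA]
      calc A (iA r) = (A * iA) r := (ContinuousLinearMap.mul_apply _ _ _).symm
        _ = r := by rw [hmul1, ContinuousLinearMap.one_apply]
    rw [h2] at h1
    nlinarith [norm_nonneg ((T ^ n) (iA r)), norm_nonneg r]
  -- term 1
  set B := (T ^ n) - (T ^ (n + 1)) with hB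
  have ht1v : iA ((T ^ n) w) = B (iA χ) := by
    have hwB : (T ^ n) w = B χ := by
      rw [hw, hB, map_sub, ContinuousLinearMap.sub_apply]
      rw [aux_apply_pow_succ T n χ]
    rw [hwB]
    have hcB : Commute iA B :=
      (hcomm.pow_right n).sub_right (hcomm.pow_right (n + 1))
    calc iA (B χ) = (iA * B) χ := (ContinuousLinearMap.mul_apply _ _ _).symm
      _ = (B * iA) χ := by rw [hcB.eq]
      _ = B (iA χ) := ContinuousLinearMap.mul_apply _ _ _
  have hBsym : ∀ x y : H, ⟪B x, y⟫ = ⟪x, B y⟫ := by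
    intro x y
    rw [hB]
    simp only [ContinuousLinearMap.sub_apply, inner_sub_left, inner_sub_right]
    rw [aux_sa_pow T hsa, aux_sa_pow T hsa]
  have hBpos : ∀ x : H, 0 ≤ ⟪B x, x⟫ := by
    intro x
    rw [hB, aux_bform]
    linarith [aux_dec T hsa hpos hne n x]
  have hBb : ∀ x : H, ⟪B x, x⟫ ≤ (1 / ((n : ℝ) + 1)) * ‖x‖ ^ 2 := by
    intro x
    rw [hB, aux_bform]
    exact aux_b_bound T hsa hpos n x
  have hq := aux_norm_sq_le B hBsym hBpos (1 / ((n : ℝ) + 1)) hBb (iA χ)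
  have hq2 := aux_est2 T hsa n (iA χ)
  have hAiχ : ((1 : H →L[ℝ] H) - T + T ^ n) (iA χ) = χ := by
    rw [← hA]
    calc A (iA χ) = (A * iA) χ := (ContinuousLinearMap.mul_apply _ _ _).symm
      _ = χ := by rw [hmul1, ContinuousLinearMap.one_apply]
  rw [hAiχ] at hq2
  have hq3 : ⟪B (iA χ), iA χ⟫ ≤ ‖χ‖ ^ 2 / 4 := by
    rw [hB, aux_bform]
    linarith [hq2]
  have ht1 : ‖B (iA χ)‖ ^ 2 ≤ (1 / ((n : ℝ) + 1)) * (‖χ‖ ^ 2 / 4) := by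
    have hs0 : (0 : ℝ) ≤ 1 / ((n : ℝ) + 1) := by positivity
    calc ‖B (iA χ)‖ ^ 2 ≤ (1 / ((n : ℝ) + 1)) * ⟪B (iA χ), iA χ⟫ := hq
      _ ≤ (1 / ((n : ℝ) + 1)) * (‖χ‖ ^ 2 / 4) := by
          exact mul_le_mul_of_nonneg_left hq3 hs0
  have hstrict : (1 / ((n : ℝ) + 1)) * (‖χ‖ ^ 2 / 4) < (ε / 2) ^ 2 := by
    have hn1 : (N0 : ℝ) ≤ (n : ℝ) := by exact_mod_cast hnN0
    have hd : ‖χ‖ ^ 2 < ε ^ 2 * ((n : ℝ) + 1) := by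
      have h1 : ‖χ‖ ^ 2 / ε ^ 2 < (n : ℝ) + 1 := by linarith [hN0]
      have h2 : (0 : ℝ) < ε ^ 2 := by positivity
      calc ‖χ‖ ^ 2 = (‖χ‖ ^ 2 / ε ^ 2) * ε ^ 2 := by field_simp
        _ < ((n : ℝ) + 1) * ε ^ 2 := by
            exact mul_lt_mul_of_pos_right h1 h2
        _ = ε ^ 2 * ((n : ℝ) + 1) := by ring
    have hnp : (0 : ℝ) < (n : ℝ) + 1 := by positivity
    rw [div_mul_eq_mul_div, one_mul, div_lt_iff₀ hnp]
    nlinarith [hd]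
  have ht1' : ‖B (iA χ)‖ < ε / 2 := by
    nlinarith [norm_nonneg (B (iA χ)), hε, ht1, hstrict]
  -- combine
  have hsplit : iA ((T ^ n) φ) = B (iA χ) + iA ((T ^ n) r) := by
    have hphi : (T ^ n) φ = (T ^ n) w + (T ^ n) r := by
      rw [hr, ← map_add]
      congr 1
      abel
    rw [hphi, map_add, ht1v]
  have hfinal : ‖iA ((T ^ n) φ)‖ < ε := by
    rw [hsplit]
    calc ‖B (iA χ) + iA ((T ^ n) r)‖ ≤ ‖B (iA χ)‖ + ‖iA ((T ^ n) r)‖ := norm_add_le _ _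
      _ < ε / 2 + ε / 2 := by
          have := lt_of_le_of_lt ht2 hrw
          exact add_lt_add ht1' this
      _ = ε := by ring
  rw [Real.dist_eq, sub_zero, abs_of_nonneg (norm_nonneg _)]
  exact hfinal
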